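/- Let G be a locally finite graph, fix r > 0, and let γ be a finite path in G. Define crease times τ₀ = 0 and, inductively, τ_{i+1} as the first time k > τ_i with d(γ_{τ_i}, γ_k) ≥ r (or len(γ) if no such time exists), stopping when τ reaches len(γ); let cr_r(γ) be the number of nonzero terms, and let iron_r(γ) be the concatenation of fixed geodesics between consecutive crease points. Then: (1) iron_r(γ) is a path with the same endpoints as γ; (2) len(iron_r(γ)) ≤ r · cr_r(γ); (3) B_r(iron_r(γ)) ⊆ B_{2r}(γ); and (4) B_r(γ) ⊆ B_{2r}(iron_r(γ)). -/
import Mathlib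

open SimpleGraph

private lemma reach_dist_triangle {V : Type} {G : SimpleGraph V} {u v w : V}
    (h1 : G.Reachable u v) (h2 : G.Reachable v w) :
    G.dist u w ≤ G.dist u v + G.dist v w := by
  obtain ⟨p, hp⟩ := h1.exists_walk_length_eq_dist
  obtain ⟨q, hq⟩ := h2.exists_walk_length_eq_dist
  rw [← hp, ← hq, ← Walk.length_append]
  exact dist_le _

private lemma concat_geodesics {V : Type} {G : SimpleGraph V} (r : ℕ) :
    ∀ (k : ℕ) (v : ℕ → V),
    (∀ i < k, G.Reachable (v i) (v (i + 1)) ∧ G.dist (v i) (v (i + 1)) ≤ r) →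
    ∃ ι : G.Walk (v 0) (v k), ι.length ≤ r * k ∧
      (∀ w ∈ ι.support, ∃ i ≤ k, G.Reachable (v i) w ∧ G.dist (v i) w ≤ r) ∧
      (∀ i ≤ k, v i ∈ ι.support) := by
  classical
  intro k
  induction k with
  | zero =>
    intro v _
    refine ⟨Walk.nil, by simp, ?_, ?_⟩
    · intro w hw
      simp only [Walk.support_nil, List.mem_singleton] at hw
      subst hw
      exact ⟨0, le_refl _, Reachable.refl _, by simp [SimpleGraph.dist_self]⟩
    · intro i hi
      interval_cases i
      simp
  | succ k ih =>
    intro v hv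
    obtain ⟨ι', hlen', hsup', hmem'⟩ := ih (fun i => v (i + 1))
      (fun i hi => hv (i + 1) (by omega))
    obtain ⟨h01, hd01⟩ := hv 0 (by omega)
    obtain ⟨p, hp⟩ := h01.exists_walk_length_eq_dist
    refine ⟨p.append ι', ?_, ?_, ?_⟩
    · rw [Walk.length_append]
      have : p.length ≤ r := hp ▸ hd01
      calc p.length + ι'.length ≤ r + r * k := by omega
        _ = r * (k + 1) := by ring
    · intro w hw
      rw [Walk.mem_support_append_iff] at hw
      rcases hw with hw | hw
      · refine ⟨0, by omega, ⟨p.takeUntil w hw⟩, ?_⟩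
        calc G.dist (v 0) w ≤ (p.takeUntil w hw).length := dist_le _
          _ ≤ p.length := Walk.length_takeUntil_le _ hw
          _ ≤ r := hp ▸ hd01
      · obtain ⟨i, hik, hreach, hdist⟩ := hsup' w hw
        exact ⟨i + 1, by omega, hreach, hdist⟩
    · intro i hi
      rw [Walk.mem_support_append_iff]
      match i with
      | 0 => exact Or.inl (Walk.start_mem_support _)
      | j + 1 => exact Or.inr (hmem' j (by omega))

theorem ironing (V : Type) (G : SimpleGraph V) (r : ℕ) (hr : 1 ≤ r)
    (a b : V) (γ : G.Walk a b) :
    ∃ (k : ℕ) (τ : ℕ → ℕ) (ι : G.Walk a b),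
      τ 0 = 0 ∧ τ k = γ.length ∧
      (∀ i < k, τ i < τ (i + 1) ∧ τ (i + 1) ≤ γ.length ∧
        (∀ j, τ i < j → j < τ (i + 1) → G.dist (γ.getVert (τ i)) (γ.getVert j) < r) ∧
        (τ (i + 1) = γ.length ∨ r ≤ G.dist (γ.getVert (τ i)) (γ.getVert (τ (i + 1))))) ∧
      (∀ i < k, τ i < γ.length) ∧
      ι.length ≤ r * k ∧
      (∀ z : V, (∃ w ∈ ι.support, G.dist w z ≤ r) → ∃ w ∈ γ.support, G.dist w z ≤ 2 * r) ∧
      (∀ z : V, (∃ w ∈ γ.support, G.dist w z ≤ r) → ∃ w ∈ ι.support, G.dist w z ≤ 2 * r) := by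
  classical
  set n := γ.length with hn
  -- every clamped vertex of γ is in the support
  have hmemγ : ∀ t, γ.getVert t ∈ γ.support := by
    intro t
    by_cases ht : t ≤ n
    · exact Walk.mem_support_iff_exists_getVert.mpr ⟨t, rfl, ht⟩
    · rw [γ.getVert_of_length_le (by omega)]
      exact Walk.end_mem_support γ
  have hreachγ : ∀ s t, G.Reachable (γ.getVert s) (γ.getVert t) := by
    intro s t
    have h1 : G.Reachable a (γ.getVert s) := by
      obtain ⟨q, q', _⟩ := Walk.mem_support_iff_exists_append.mp (hmemγ s)
      exact ⟨q⟩
    have h2 : G.Reachable a (γ.getVert t) := by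
      obtain ⟨q, q', _⟩ := Walk.mem_support_iff_exists_append.mp (hmemγ t)
      exact ⟨q⟩
    exact h1.symm.trans h2
  -- the "next crease time" function
  set P : ℕ → ℕ → Prop := fun t j => t < j ∧ j ≤ n ∧ r ≤ G.dist (γ.getVert t) (γ.getVert j)
    with hP
  set f : ℕ → ℕ := fun t => if h : ∃ j, P t j then Nat.find h else n with hf
  have hfle : ∀ t, f t ≤ n := by
    intro t
    by_cases h : ∃ j, P t j
    · simp only [hf, dif_pos h]
      exact (Nat.find_spec h).2.1
    · simp [hf, dif_neg h]
  have hfgt : ∀ t, t < n → t < f t := by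
    intro t ht
    by_cases h : ∃ j, P t j
    · simp only [hf, dif_pos h]
      exact (Nat.find_spec h).1
    · simpa [hf, dif_neg h] using ht
  have hfn : f n = n := by
    have h : ¬ ∃ j, P n j := by
      rintro ⟨j, hj1, hj2, -⟩
      omega
    simp [hf, dif_neg h]
  set τ : ℕ → ℕ := fun i => f^[i] 0 with hτ
  have hτ0 : τ 0 = 0 := rfl
  have hτsucc : ∀ i, τ (i + 1) = f (τ i) := by
    intro i
    simp [hτ, Function.iterate_succ_apply']
  have hτle : ∀ i, τ i ≤ n := by
    intro i
    induction i with
    | zero => simp [hτ0]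
    | succ i _ => rw [hτsucc]; exact hfle _
  have hτn : ∀ i, τ i = n ∨ i ≤ τ i := by
    intro i
    induction i with
    | zero => right; omega
    | succ i ih =>
      rcases ih with h | h
      · left; rw [hτsucc, h, hfn]
      · by_cases h2 : τ i = n
        · left; rw [hτsucc, h2, hfn]
        · right
          have : τ i < n := lt_of_le_of_ne (hτle i) h2
          have := hfgt (τ i) this
          rw [hτsucc]; omega
  have hex : ∃ i, τ i = n := by
    refine ⟨n, ?_⟩
    rcases hτn n with h | h
    · exact h
    · exact le_antisymm (hτle n) h
  set k : ℕ := Nat.find hex with hk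
  have hτk : τ k = n := Nat.find_spec hex
  have hτltn : ∀ i < k, τ i < n := by
    intro i hi
    exact lt_of_le_of_ne (hτle i) (Nat.find_min hex hi)
  -- the crease properties
  have hcrease : ∀ i < k, τ i < τ (i + 1) ∧ τ (i + 1) ≤ n ∧
      (∀ j, τ i < j → j < τ (i + 1) → G.dist (γ.getVert (τ i)) (γ.getVert j) < r) ∧
      (τ (i + 1) = n ∨ r ≤ G.dist (γ.getVert (τ i)) (γ.getVert (τ (i + 1)))) := by
    intro i hi
    have ht : τ i < n := hτltn i hi
    by_cases h : ∃ j, P (τ i) j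
    · have hs : τ (i + 1) = Nat.find h := by rw [hτsucc]; simp only [hf, dif_pos h]
      obtain ⟨h1, h2, h3⟩ := Nat.find_spec h
      rw [hs]
      refine ⟨h1, h2, ?_, Or.inr h3⟩
      intro j hj1 hj2
      have hnp := Nat.find_min h hj2
      simp only [hP] at hnp
      push_neg at hnp
      exact hnp hj1 (by omega)
    · have hs : τ (i + 1) = n := by rw [hτsucc]; simp only [hf, dif_neg h]
      rw [hs]
      refine ⟨ht, le_refl _, ?_, Or.inl rfl⟩
      intro j hj1 hj2
      push_neg at h
      have hnp := h j
      simp only [hP] at hnp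
      push_neg at hnp
      exact hnp hj1 (by omega)
  -- distance between consecutive crease points is at most r
  have hdistr : ∀ i < k, G.dist (γ.getVert (τ i)) (γ.getVert (τ (i + 1))) ≤ r := by
    intro i hi
    obtain ⟨h1, h2, h3, _⟩ := hcrease i hi
    set t := τ i
    set s := τ (i + 1)
    have hsub : G.dist (γ.getVert t) (γ.getVert (s - 1)) ≤ r - 1 := by
      by_cases hts : s - 1 = t
      · rw [hts, SimpleGraph.dist_self]; omega
      · have := h3 (s - 1) (by omega) (by omega)
        omega
    obtain ⟨p, hp⟩ := (hreachγ t (s - 1)).exists_walk_length_eq_dist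
    have hadj : G.Adj (γ.getVert (s - 1)) (γ.getVert (s - 1 + 1)) :=
      γ.adj_getVert_succ (by omega)
    have hs1 : s - 1 + 1 = s := by omega
    have := dist_le ((p.concat hadj).copy rfl (by rw [hs1]))
    rw [Walk.length_copy, Walk.length_concat, hp] at this
    omega
  -- build the ironed walk
  obtain ⟨ι₀, hlen, hsup, hmem⟩ := concat_geodesics r k (fun i => γ.getVert (τ i))
    (fun i hi => ⟨hreachγ _ _, hdistr i hi⟩)
  have he1 : γ.getVert (τ 0) = a := by rw [hτ0, γ.getVert_zero]
  have he2 : γ.getVert (τ k) = b := by rw [hτk, hn, γ.getVert_length]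
  refine ⟨k, τ, ι₀.copy he1 he2, hτ0, hτk, hcrease, hτltn, by rwa [Walk.length_copy], ?_, ?_⟩
  · -- B_r(ι) ⊆ B_{2r}(γ)
    intro z ⟨w, hw, hwz⟩
    rw [Walk.support_copy] at hw
    obtain ⟨i, hik, hreach, hdist⟩ := hsup w hw
    refine ⟨γ.getVert (τ i), hmemγ _, ?_⟩
    by_cases hrz : G.Reachable w z
    · calc G.dist (γ.getVert (τ i)) z ≤ G.dist (γ.getVert (τ i)) w + G.dist w z :=
            reach_dist_triangle hreach hrz
        _ ≤ 2 * r := by omega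
    · have : ¬ G.Reachable (γ.getVert (τ i)) z := fun h => hrz (hreach.symm.trans h)
      rw [dist_eq_zero_of_not_reachable this]
      omega
  · -- B_r(γ) ⊆ B_{2r}(ι)
    intro z ⟨w, hw, hwz⟩
    obtain ⟨j, hjw, hjn⟩ := Walk.mem_support_iff_exists_getVert.mp hw
    -- find the crease interval containing j
    have hkey : ∃ i ≤ k, G.dist (γ.getVert (τ i)) (γ.getVert j) ≤ r := by
      by_cases hjn' : j = n
      · refine ⟨k, le_refl _, ?_⟩
        rw [hτk, hjn', SimpleGraph.dist_self]
        omega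
      · have hjltn : j < n := lt_of_le_of_ne hjn hjn'
        have hex2 : ∃ m, j < τ m := ⟨k, by omega⟩
        set m := Nat.find hex2 with hm
        have hmspec : j < τ m := Nat.find_spec hex2
        have hm0 : m ≠ 0 := by
          intro h
          rw [h, hτ0] at hmspec
          omega
        have hτm1 : τ (m - 1) ≤ j := by
          have := Nat.find_min hex2 (show m - 1 < m by omega)
          omega
        have hmk : m ≤ k := Nat.find_le (by omega)
        have him1k : m - 1 < k := by
          rcases Nat.lt_or_ge (m - 1) k with h | h
          · exact h
          · exfalso
            have h1 : τ (m - 1) = n ∨ m - 1 ≤ τ (m - 1) := hτn (m - 1)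
            -- m - 1 ≥ k and m ≤ k means m = k and m - 1 = k, so k ≤ m - 1 = m ≤ k
            have : m - 1 = k := by omega
            rw [this, hτk] at hτm1
            omega
        refine ⟨m - 1, by omega, ?_⟩
        by_cases hje : τ (m - 1) = j
        · rw [hje, SimpleGraph.dist_self]; omega
        · obtain ⟨_, _, h3, _⟩ := hcrease (m - 1) him1k
          have := h3 j (by omega) (by rw [show m - 1 + 1 = m by omega]; exact hmspec)
          omega
    obtain ⟨i, hik, hdist⟩ := hkey
    refine ⟨γ.getVert (τ i), by rw [Walk.support_copy]; exact hmem i hik, ?_⟩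
    rw [← hjw] at hwz
    by_cases hrz : G.Reachable (γ.getVert j) z
    · calc G.dist (γ.getVert (τ i)) z
          ≤ G.dist (γ.getVert (τ i)) (γ.getVert j) + G.dist (γ.getVert j) z :=
            reach_dist_triangle (hreachγ _ _) hrz
        _ ≤ 2 * r := by omega
    · have : ¬ G.Reachable (γ.getVert (τ i)) z := fun h => hrz ((hreachγ j (τ i)).trans h)
      rw [dist_eq_zero_of_not_reachable this]
      omega
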